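/- Let A be an abelian p-group and φ a power automorphism of A of finite order m > 1 with m dividing p − 1. Then for every k ∈ {1, …, m−1}, the fixed-point subgroup C_A(φ^k) is trivial. -/

import Mathlib

private lemma binom_aux (x : ℤ) : ∀ m : ℕ, ∃ c : ℤ, (1 + x) ^ m = 1 + m * x + x ^ 2 * c := by
  intro m
  induction m with
  | zero => exact ⟨0, by ring⟩
  | succ m ih =>
    obtain ⟨c, hc⟩ := ih
    refine ⟨m + c + c * x, ?_⟩
    rw [pow_succ, hc]
    push_cast
    ring

private lemma key_aux (p : ℕ) (hp : p.Prime) (m : ℕ) (hpm : ¬ p ∣ m) :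
    ∀ r : ℕ, ∀ s : ℤ, (p : ℤ) ∣ s - 1 → (p : ℤ) ^ r ∣ s ^ m - 1 → (p : ℤ) ^ r ∣ s - 1 := by
  have hpZ : Prime (p : ℤ) := Nat.prime_iff_prime_int.mp hp
  intro r
  induction r with
  | zero => simp
  | succ r ih =>
    intro s h1 hm
    rcases Nat.eq_zero_or_pos r with rfl | hr
    · simpa using h1
    · have hr' : (p : ℤ) ^ r ∣ s - 1 :=
        ih s h1 ((pow_dvd_pow _ (Nat.le_succ r)).trans hm)
      obtain ⟨t, ht⟩ := hr'
      obtain ⟨c, hc⟩ := binom_aux ((p : ℤ) ^ r * t) m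
      have hs : s = 1 + (p : ℤ) ^ r * t := by linarith
      have hsm : s ^ m - 1 = (p:ℤ)^r * ((m : ℤ) * t) + (p:ℤ)^(2*r) * (t ^ 2 * c) := by
        rw [hs, hc]; ring
      have h2r : (p : ℤ) ^ (r + 1) ∣ (p:ℤ)^(2*r) * (t ^ 2 * c) :=
        Dvd.dvd.mul_right (pow_dvd_pow _ (by omega)) _
      have hmt : (p : ℤ) ^ (r + 1) ∣ (p:ℤ)^r * ((m : ℤ) * t) := by
        have := (dvd_sub hm h2r)
        rwa [hsm, add_sub_cancel_right] at this
      have hmt' : (p:ℤ)^r * (p:ℤ) ∣ (p:ℤ)^r * ((m:ℤ)*t) := by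
        rw [← pow_succ]; exact hmt
      have hpdvd : (p : ℤ) ∣ (m : ℤ) * t :=
        (mul_dvd_mul_iff_left (pow_ne_zero r hpZ.ne_zero)).mp hmt'
      rcases hpZ.dvd_mul.mp hpdvd with h | h
      · exact absurd (Int.ofNat_dvd.mp (by exact_mod_cast h)) hpm
      · obtain ⟨t', rfl⟩ := h
        refine ⟨t', ?_⟩
        rw [ht, pow_succ]
        ring

/-- If `φ` is a power automorphism of an abelian `p`-group of finite order `m > 1` with
`m ∣ p - 1`, then `φ ^ k` is fixed-point-free for `1 ≤ k ≤ m - 1`. -/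
theorem fixed_points_of_power_automorphism_trivial
    {A : Type*} [CommGroup A] (p : ℕ) (hp : p.Prime) (hA : IsPGroup p A)
    (φ : MulAut A) (hφ : ∀ a : A, ∃ n : ℤ, φ a = a ^ n)
    (m : ℕ) (hm : orderOf φ = m) (hm1 : 1 < m) (hdvd : m ∣ p - 1) :
    ∀ k : ℕ, 1 ≤ k → k ≤ m - 1 → ∀ a : A, (φ ^ k) a = a → a = 1 := by
  haveI : Fact p.Prime := ⟨hp⟩
  have hp2 : 2 ≤ p := hp.two_le
  have hmlep : m ≤ p - 1 := Nat.le_of_dvd (by omega) hdvd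
  have hpm : ¬ p ∣ m := fun h => by have := Nat.le_of_dvd (by omega) h; omega
  -- powers of φ are power automorphisms
  have powk : ∀ (j : ℕ) (x : A), ∃ n : ℤ, (φ ^ j) x = x ^ n := by
    intro j
    induction j with
    | zero => exact fun x => ⟨1, by simp⟩
    | succ j ih =>
      intro x
      obtain ⟨n0, hn0⟩ := hφ x
      obtain ⟨n, hn⟩ := ih (x ^ n0)
      exact ⟨n0 * n, by rw [pow_succ, MulAut.mul_apply, hn0, hn, ← zpow_mul]⟩
  intro k hk1 hk2 a hfix
  by_contra ha
  -- order of a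
  obtain ⟨r, hr⟩ := IsPGroup.iff_orderOf.mp hA a
  have hr1 : 1 ≤ r := by
    rcases Nat.eq_zero_or_pos r with rfl | h
    · exact absurd (orderOf_eq_one_iff.mp (by simpa using hr)) ha
    · exact h
  -- the element b of order p fixed by φ^k
  set b : A := a ^ (p ^ (r - 1)) with hb_def
  have hbp : b ^ p = 1 := by
    rw [hb_def, ← pow_mul, ← pow_succ]
    have : r - 1 + 1 = r := by omega
    rw [this, ← hr, pow_orderOf_eq_one]
  have hbne : b ≠ 1 := by
    intro h
    have := orderOf_dvd_iff_pow_eq_one.mpr h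
    rw [hr] at this
    exact absurd (Nat.pow_dvd_pow_iff_le_right hp.one_lt |>.mp this) (by omega)
  have hb_ord : orderOf b = p := orderOf_eq_prime hbp hbne
  have hbfix : (φ ^ k) b = b := by
    rw [hb_def, map_pow, hfix]
  -- step 3: φ^k fixes all elements of order dividing p
  have socle : ∀ x : A, x ^ p = 1 → (φ ^ k) x = x := by
    intro x hx
    rcases eq_or_ne x 1 with rfl | hxne
    · simp
    have hx_ord : orderOf x = p := orderOf_eq_prime hx hxne
    obtain ⟨s, hs⟩ := powk k x
    obtain ⟨u, hu⟩ := powk k (x * b)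
    have hu' : x ^ u * b ^ u = x ^ s * b := by
      have : (φ ^ k) (x * b) = x ^ s * b := by rw [map_mul, hs, hbfix]
      rw [hu, mul_zpow] at this
      exact this
    have hxb : x ^ (u - s) = b ^ (1 - u) := by
      rw [zpow_sub, zpow_sub, zpow_one, ← div_eq_mul_inv, ← div_eq_mul_inv,
        div_eq_div_iff_mul_eq_mul]
      exact hu'.trans (mul_comm _ _)
    -- if p ∣ s - 1, then x^s = x
    have finish : (p : ℤ) ∣ s - 1 → (φ ^ k) x = x := by
      intro h1
      rw [hs, show s = 1 + (s - 1) by ring, zpow_add, zpow_one]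
      obtain ⟨t, ht⟩ := h1
      rw [ht, zpow_mul, show ((p : ℤ)) = ((p : ℕ) : ℤ) from rfl, zpow_natCast, hx,
        one_zpow, mul_one]
    by_cases h2 : (p : ℤ) ∣ u - s
    · apply finish
      have hxus : x ^ (u - s) = 1 := by
        rw [← orderOf_dvd_iff_zpow_eq_one, hx_ord]; exact h2
      have hbu : (p : ℤ) ∣ 1 - u := by
        have hb1 : b ^ (1 - u) = 1 := by rw [← hxb]; exact hxus
        have h3 := orderOf_dvd_iff_zpow_eq_one.mpr hb1
        rwa [hb_ord] at h3
      have : s - 1 = (s - u) + (u - 1) := by ring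
      rw [this]
      exact dvd_add (by simpa using (dvd_neg.mpr h2)) (by simpa using (dvd_neg.mpr hbu))
    · -- x is a power of b
      have hcop : IsCoprime ((p : ℤ)) (u - s) :=
        (Nat.prime_iff_prime_int.mp hp).coprime_iff_not_dvd.mpr h2
      obtain ⟨α, β, hαβ⟩ := hcop
      have hx_eq : x = b ^ ((1 - u) * β) := by
        calc x = x ^ (1 : ℤ) := (zpow_one x).symm
          _ = x ^ ((p : ℤ) * α + (u - s) * β) := by
                rw [show (p : ℤ) * α + (u - s) * β = α * (p : ℤ) + β * (u - s) by ring, hαβ]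
          _ = (x ^ ((p : ℤ))) ^ α * (x ^ (u - s)) ^ β := by
                rw [zpow_add, zpow_mul, zpow_mul]
          _ = (x ^ (u - s)) ^ β := by
                rw [show ((p : ℤ)) = ((p : ℕ) : ℤ) from rfl, zpow_natCast, hx, one_zpow, one_mul]
          _ = b ^ ((1 - u) * β) := by rw [hxb, ← zpow_mul]
      rw [hx_eq, map_zpow, hbfix]
  -- step 4: φ^k = 1
  have hφk1 : φ ^ k = 1 := by
    ext x
    rcases eq_or_ne x 1 with rfl | hxne
    · simp
    obtain ⟨rx, hrx⟩ := IsPGroup.iff_orderOf.mp hA x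
    have hrx1 : 1 ≤ rx := by
      rcases Nat.eq_zero_or_pos rx with rfl | h
      · exact absurd (orderOf_eq_one_iff.mp (by simpa using hrx)) hxne
      · exact h
    obtain ⟨s, hs⟩ := powk k x
    -- p ∣ s - 1 from the socle
    have h1 : (p : ℤ) ∣ s - 1 := by
      have hy : (x ^ (p ^ (rx - 1))) ^ p = 1 := by
        rw [← pow_mul, ← pow_succ, show rx - 1 + 1 = rx by omega, ← hrx, pow_orderOf_eq_one]
      have := socle (x ^ (p ^ (rx - 1))) hy
      rw [map_pow, hs, ← zpow_natCast (x ^ s), ← zpow_mul, ← zpow_natCast x (p ^ (rx - 1))] at this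
      have hdv : (orderOf x : ℤ) ∣ s * (p ^ (rx - 1) : ℕ) - (p ^ (rx - 1) : ℕ) :=
        orderOf_dvd_sub_iff_zpow_eq_zpow.mpr this
      rw [hrx] at hdv
      push_cast at hdv
      have hfact : s * (p:ℤ) ^ (rx - 1) - (p:ℤ) ^ (rx - 1) = (s - 1) * (p:ℤ) ^ (rx - 1) := by ring
      rw [hfact, show (rx : ℕ) = (rx - 1) + 1 by omega, pow_succ,
        show ((p:ℤ) ^ (rx - 1) * (p:ℤ)) = (p:ℤ) * (p:ℤ) ^ (rx - 1) by ring] at hdv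
      exact (mul_dvd_mul_iff_right
        (pow_ne_zero _ ((Nat.prime_iff_prime_int.mp hp)).ne_zero)).mp
        (by rwa [mul_comm ((p:ℤ)) ((p:ℤ) ^ (rx - 1))] at hdv)
    -- p^rx ∣ s^m - 1 from φ^m = 1
    have hiter : ∀ j : ℕ, ((φ ^ k) ^ j) x = x ^ (s ^ j) := by
      intro j
      induction j with
      | zero => simp
      | succ j ih =>
        have hstep : ((φ ^ k) ^ (j + 1)) x = ((φ ^ k) ^ j) ((φ ^ k) x) := by
          rw [pow_succ, MulAut.mul_apply]
        rw [hstep, hs, map_zpow, ih, ← zpow_mul]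
        congr 1
        exact (pow_succ s j).symm
    have hφm : (φ ^ k) ^ m = 1 := by
      rw [← pow_mul, mul_comm, pow_mul, ← hm, pow_orderOf_eq_one, one_pow]
    have hsm : x ^ (s ^ m) = x ^ (1 : ℤ) := by
      rw [← hiter m, hφm, zpow_one, MulAut.one_apply]
    have hdvd2 : (p : ℤ) ^ rx ∣ s ^ m - 1 := by
      have := orderOf_dvd_sub_iff_zpow_eq_zpow.mpr hsm
      rw [hrx] at this
      push_cast at this
      exact this
    have hfinal : (p : ℤ) ^ rx ∣ s - 1 := key_aux p hp m hpm rx s h1 hdvd2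
    have : x ^ s = x ^ (1 : ℤ) := by
      rw [← orderOf_dvd_sub_iff_zpow_eq_zpow, hrx]
      push_cast
      exact hfinal
    rw [MulAut.one_apply, hs, this, zpow_one]
  have : m ∣ k := by rw [← hm]; exact orderOf_dvd_of_pow_eq_one hφk1
  have := Nat.le_of_dvd (by omega) this
  omega
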